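/- Suppose B is G-regular and V is a finite-dimensional ℚ_p-vector space with a ℚ_p-linear G-action. If dim_E D_B(V) = dim_{ℚ_p} V, then the natural B-linear map D_B(V) ⊗_E B → V ⊗_{ℚ_p} B sending d ⊗ b to b·d is bijective (i.e., V is B-admissible). -/

import Mathlib

open scoped TensorProduct

/-- The subring `E = B^G` of `G`-invariant elements of `B`. -/
def invariantSubring (G : Type*) [Group G] (B : Type*) [CommRing B]
    [MulSemiringAction G B] : Subring B where
  carrier := {b | ∀ g : G, g • b = b}
  zero_mem' g := smul_zero g
  one_mem' g := smul_one g
  add_mem' := fun ha hb g => by rw [smul_add, ha g, hb g]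
  mul_mem' := fun ha hb g => by rw [smul_mul', ha g, hb g]
  neg_mem' := fun ha g => by rw [smul_neg, ha g]

section

variable (p : ℕ) [Fact p.Prime]
variable (G : Type*) [Group G]
variable (B : Type*) [CommRing B] [Algebra ℚ_[p] B]
variable [MulSemiringAction G B] [SMulCommClass G ℚ_[p] B]
variable (V : Type*) [AddCommGroup V] [Module ℚ_[p] V]
variable [DistribMulAction G V] [SMulCommClass G ℚ_[p] V]

/-- The diagonal (semilinear) action of `g ∈ G` on `B ⊗[ℚ_p] V`,
`g • (b ⊗ v) = (g • b) ⊗ (g • v)`. -/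
noncomputable def diagAct (g : G) : B ⊗[ℚ_[p]] V →ₗ[ℚ_[p]] B ⊗[ℚ_[p]] V :=
  TensorProduct.map (DistribSMul.toLinearMap ℚ_[p] B g)
    (DistribSMul.toLinearMap ℚ_[p] V g)

lemma diagAct_smul (g : G) (b : B) (x : B ⊗[ℚ_[p]] V) :
    diagAct p G B V g (b • x) = (g • b) • diagAct p G B V g x := by
  induction x with
  | zero => simp
  | tmul b' v =>
      simp only [TensorProduct.smul_tmul', smul_eq_mul, diagAct, TensorProduct.map_tmul,
        DistribSMul.toLinearMap_apply, smul_mul']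
  | add x y hx hy => rw [smul_add, map_add, hx, hy, map_add, smul_add]

/-- `D_B(V) = (V ⊗[ℚ_p] B)^G` as a module over `E = B^G`. -/
noncomputable def invariantsD : Submodule (invariantSubring G B) (B ⊗[ℚ_[p]] V) where
  carrier := {x | ∀ g : G, diagAct p G B V g x = x}
  zero_mem' g := map_zero _
  add_mem' := fun hx hy g => by rw [map_add, hx g, hy g]
  smul_mem' := fun e x hx g => by
    have h : diagAct p G B V g ((e : B) • x) = (g • (e : B)) • diagAct p G B V g x :=
      diagAct_smul p G B V g (e : B) x
    have he : g • (e : B) = (e : B) := e.2 g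
    show diagAct p G B V g ((e : B) • x) = (e : B) • x
    rw [h, he, hx g]

/-- The natural map `D_B(V) ⊗[E] B → V ⊗[ℚ_p] B`, `d ⊗ b ↦ b • d`. -/
noncomputable def comparisonMap :
    (invariantsD p G B V) ⊗[invariantSubring G B] B →ₗ[invariantSubring G B]
      B ⊗[ℚ_[p]] V :=
  TensorProduct.lift
    { toFun := fun d =>
        { toFun := fun b => b • (d : B ⊗[ℚ_[p]] V)
          map_add' := fun b₁ b₂ => add_smul b₁ b₂ _
          map_smul' := fun e b => by
            show ((e : B) * b) • (d : B ⊗[ℚ_[p]] V) = (e : B) • (b • (d : B ⊗[ℚ_[p]] V))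
            rw [mul_smul] }
      map_add' := fun d₁ d₂ => by
        ext b
        simp
      map_smul' := fun e d => by
        ext b
        show b • ((e : B) • (d : B ⊗[ℚ_[p]] V)) = (e : B) • (b • (d : B ⊗[ℚ_[p]] V))
        rw [smul_comm] }

end

set_option linter.unusedSectionVars false
set_option maxHeartbeats 1000000
set_option synthInstance.maxHeartbeats 400000
section Aux
variable (p : ℕ) [Fact p.Prime]
variable (G : Type*) [Group G]
variable (B : Type*) [CommRing B] [IsDomain B] [Algebra ℚ_[p] B]
variable [MulSemiringAction G B] [SMulCommClass G ℚ_[p] B]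
variable [MulSemiringAction G (FractionRing B)]
variable (V : Type*) [AddCommGroup V] [Module ℚ_[p] V]
variable [DistribMulAction G V] [SMulCommClass G ℚ_[p] V]

lemma smulCommClassK
    (hext : ∀ (g : G) (b : B),
      g • algebraMap B (FractionRing B) b = algebraMap B (FractionRing B) (g • b)) :
    SMulCommClass G ℚ_[p] (FractionRing B) := by
  constructor
  intro g q x
  rw [Algebra.smul_def, Algebra.smul_def, IsScalarTower.algebraMap_apply ℚ_[p] B (FractionRing B),
    smul_mul', hext]
  congr 2
  rw [Algebra.algebraMap_eq_smul_one, smul_comm, smul_one]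

/-- The map `B ⊗ V → K ⊗ V`. -/
noncomputable def jmap : B ⊗[ℚ_[p]] V →ₗ[ℚ_[p]] (FractionRing B) ⊗[ℚ_[p]] V :=
  LinearMap.rTensor V (IsScalarTower.toAlgHom ℚ_[p] B (FractionRing B)).toLinearMap

lemma jmap_tmul (b : B) (v : V) :
    jmap p B V (b ⊗ₜ v) = algebraMap B (FractionRing B) b ⊗ₜ v := rfl

lemma jmap_injective : Function.Injective (jmap p B V) :=
  Module.Flat.rTensor_preserves_injective_linearMap _
    (by simpa using IsFractionRing.injective B (FractionRing B))

lemma jmap_smul (b : B) (x : B ⊗[ℚ_[p]] V) :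
    jmap p B V (b • x) = algebraMap B (FractionRing B) b • jmap p B V x := by
  induction x with
  | zero => simp
  | tmul b' v => simp [TensorProduct.smul_tmul', jmap_tmul, Algebra.smul_def]
  | add x y hx hy => rw [smul_add, map_add, hx, hy, map_add, smul_add]

section KAct
variable [SMulCommClass G ℚ_[p] (FractionRing B)]

noncomputable def diagActK (g : G) :
    (FractionRing B) ⊗[ℚ_[p]] V →ₗ[ℚ_[p]] (FractionRing B) ⊗[ℚ_[p]] V :=
  TensorProduct.map (DistribSMul.toLinearMap ℚ_[p] (FractionRing B) g)
    (DistribSMul.toLinearMap ℚ_[p] V g)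

lemma diagActK_smul (g : G) (c : FractionRing B) (x : (FractionRing B) ⊗[ℚ_[p]] V) :
    diagActK p G B V g (c • x) = (g • c) • diagActK p G B V g x := by
  induction x with
  | zero => simp
  | tmul b' v =>
      simp only [TensorProduct.smul_tmul', smul_eq_mul, diagActK, TensorProduct.map_tmul,
        DistribSMul.toLinearMap_apply, smul_mul']
  | add x y hx hy => rw [smul_add, map_add, hx, hy, map_add, smul_add]

lemma diagActK_jmap
    (hext : ∀ (g : G) (b : B),
      g • algebraMap B (FractionRing B) b = algebraMap B (FractionRing B) (g • b))
    (g : G) (x : B ⊗[ℚ_[p]] V) :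
    diagActK p G B V g (jmap p B V x) = jmap p B V (diagAct p G B V g x) := by
  induction x with
  | zero => simp
  | tmul b v =>
      simp only [jmap_tmul, diagActK, diagAct, TensorProduct.map_tmul,
        DistribSMul.toLinearMap_apply, hext]
  | add x y hx hy => simp only [map_add, hx, hy]

lemma indep_K [SMulCommClass G ℚ_[p] (FractionRing B)]
    (hext : ∀ (g : G) (b : B),
      g • algebraMap B (FractionRing B) b = algebraMap B (FractionRing B) (g • b))
    (hreg₁ : ∀ x : FractionRing B, (∀ g : G, g • x = x) →
      x ∈ (algebraMap B (FractionRing B)).range)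
    {ι : Type*} (d : ι → invariantsD p G B V)
    (hd : LinearIndependent (invariantSubring G B) d) :
    LinearIndependent (FractionRing B)
      (fun i => jmap p B V ((d i : B ⊗[ℚ_[p]] V))) := by
  classical
  set K := FractionRing B
  set v : ι → K ⊗[ℚ_[p]] V := fun i => jmap p B V ((d i : B ⊗[ℚ_[p]] V)) with hv
  have hinj : Function.Injective (algebraMap B K) := IsFractionRing.injective B K
  have hfix : ∀ (g : G) (i : ι), diagActK p G B V g (v i) = v i := by
    intro g i
    rw [hv]
    simp only
    rw [diagActK_jmap p G B V hext, (d i).2 g]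
  rw [linearIndependent_iff']
  suffices H : ∀ (n : ℕ) (s : Finset ι) (f : ι → K), s.card ≤ n →
      ∑ i ∈ s, f i • v i = 0 → ∀ i ∈ s, f i = 0 by
    intro s f h; exact H s.card s f le_rfl h
  intro n
  induction n using Nat.strong_induction_on with
  | _ n IH =>
  intro s f hcard hrel
  by_contra hcon
  push_neg at hcon
  obtain ⟨i₀, hi₀s, hi₀⟩ := hcon
  set f' : ι → K := fun i => (f i₀)⁻¹ * f i with hf'
  have hrel' : ∑ i ∈ s, f' i • v i = 0 := by
    have : ∑ i ∈ s, f' i • v i = (f i₀)⁻¹ • ∑ i ∈ s, f i • v i := by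
      rw [Finset.smul_sum]
      exact Finset.sum_congr rfl fun i _ => by rw [hf', mul_smul]
    rw [this, hrel, smul_zero]
  have hf'i₀ : f' i₀ = 1 := inv_mul_cancel₀ hi₀
  have hfixed : ∀ (g : G), ∀ i ∈ s, g • f' i = f' i := by
    intro g
    have hrelg : ∑ i ∈ s, (g • f' i) • v i = 0 := by
      have h0 := congrArg (diagActK p G B V g) hrel'
      rw [map_sum, map_zero] at h0
      rw [← h0]
      exact Finset.sum_congr rfl fun i _ => by rw [diagActK_smul, hfix]
    set m : ι → K := fun i => f' i - g • f' i with hm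
    have hrelm : ∑ i ∈ s, m i • v i = 0 := by
      have : ∑ i ∈ s, m i • v i
          = ∑ i ∈ s, f' i • v i - ∑ i ∈ s, (g • f' i) • v i := by
        rw [← Finset.sum_sub_distrib]
        exact Finset.sum_congr rfl fun i _ => sub_smul (f' i) (g • f' i) (v i)
      rw [this, hrel', hrelg, sub_zero]
    have hmi₀ : m i₀ = 0 := by
      rw [hm]; simp only [hf'i₀, smul_eq_mul]
      rw [show (g : G) • (1 : K) = 1 from smul_one g, sub_self]
    have hrelm' : ∑ i ∈ s.erase i₀, m i • v i = 0 := by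
      have := (Finset.add_sum_erase s (fun i => m i • v i) hi₀s).symm
      rw [hmi₀, zero_smul, zero_add] at this
      rw [← this, hrelm]
    have hcard' : (s.erase i₀).card ≤ n - 1 := by
      have h1 := Finset.card_erase_of_mem hi₀s
      have h2 : 0 < s.card := Finset.card_pos.2 ⟨i₀, hi₀s⟩
      omega
    have hn : n - 1 < n := by
      have h2 : 0 < s.card := Finset.card_pos.2 ⟨i₀, hi₀s⟩
      omega
    have hmzero := IH (n - 1) hn (s.erase i₀) m hcard' hrelm'
    intro i hi
    rcases eq_or_ne i i₀ with rfl | hne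
    · rw [hf'i₀]; exact smul_one g
    · have h := hmzero i (Finset.mem_erase.2 ⟨hne, hi⟩)
      rw [hm] at h
      exact (sub_eq_zero.1 h).symm
  have hex : ∀ i : ι, ∃ bb : B, i ∈ s → algebraMap B K bb = f' i := by
    intro i
    by_cases hi : i ∈ s
    · obtain ⟨bb, hbb⟩ := hreg₁ (f' i) (fun g => hfixed g i hi)
      exact ⟨bb, fun _ => hbb⟩
    · exact ⟨0, fun h => absurd h hi⟩
  choose bb hbb using hex
  have hbinv : ∀ i ∈ s, ∀ g : G, g • bb i = bb i := by
    intro i hi g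
    apply hinj
    rw [← hext, hbb i hi, hfixed g i hi]
  set eB : ι → invariantSubring G B :=
    fun i => if h : i ∈ s then ⟨bb i, fun g => hbinv i h g⟩ else 0 with heB
  have hcoe : ((∑ i ∈ s, eB i • d i : invariantsD p G B V) : B ⊗[ℚ_[p]] V)
      = ∑ i ∈ s, (bb i) • ((d i : B ⊗[ℚ_[p]] V)) := by
    rw [AddSubmonoidClass.coe_finset_sum]
    refine Finset.sum_congr rfl fun i hi => ?_
    rw [heB]
    simp only [dif_pos hi]
    rfl
  have hsum : ∑ i ∈ s, eB i • d i = 0 := by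
    have hj : jmap p B V ((∑ i ∈ s, eB i • d i : invariantsD p G B V) : B ⊗[ℚ_[p]] V) = 0 := by
      rw [hcoe, map_sum]
      have : ∀ i ∈ s, jmap p B V ((bb i) • ((d i : B ⊗[ℚ_[p]] V))) = f' i • v i := by
        intro i hi
        rw [jmap_smul, hbb i hi]
      rw [Finset.sum_congr rfl this, hrel']
    have h0 : ((∑ i ∈ s, eB i • d i : invariantsD p G B V) : B ⊗[ℚ_[p]] V) = 0 :=
      jmap_injective p B V (by rw [hj, map_zero])
    exact Subtype.ext h0
  have heB0 := linearIndependent_iff'ₛ.1 hd s eB 0 (by rw [hsum]; simp) i₀ hi₀s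
  have hb0 : bb i₀ = 0 := by
    have := congrArg (Subtype.val) heB0
    rw [heB] at this
    simpa [dif_pos hi₀s] using this
  have : f' i₀ = 0 := by rw [← hbb i₀ hi₀s, hb0, map_zero]
  rw [hf'i₀] at this
  exact one_ne_zero this

lemma span_exists [SMulCommClass G ℚ_[p] (FractionRing B)] [FiniteDimensional ℚ_[p] V]
    (hext : ∀ (g : G) (b : B),
      g • algebraMap B (FractionRing B) b = algebraMap B (FractionRing B) (g • b))
    (hreg₁ : ∀ x : FractionRing B, (∀ g : G, g • x = x) →
      x ∈ (algebraMap B (FractionRing B)).range)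
    (hreg₂ : ∀ b : B, b ≠ 0 → (∀ g : G, ∃ c : ℚ_[p], g • b = c • b) → IsUnit b)
    {ι : Type*} [Fintype ι] [DecidableEq ι] [Nonempty ι]
    (hcardι : Fintype.card ι = Module.finrank ℚ_[p] V)
    (d : ι → invariantsD p G B V)
    (hd : LinearIndependent (invariantSubring G B) d)
    (y : B ⊗[ℚ_[p]] V) :
    ∃ b : ι → B, ∑ i, b i • ((d i : B ⊗[ℚ_[p]] V)) = y := by
  classical
  set K := FractionRing B
  set e : Module.Basis ι ℚ_[p] V :=
    (Module.finBasis ℚ_[p] V).reindex (Fintype.equivFinOfCardEq hcardι).symm with he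
  set f : Module.Basis ι B (B ⊗[ℚ_[p]] V) := Algebra.TensorProduct.basis B e with hf
  set fK : Module.Basis ι K (K ⊗[ℚ_[p]] V) := Algebra.TensorProduct.basis K e with hfK
  set M : Matrix ι ι B := Matrix.of fun i j => f.repr ((d j : B ⊗[ℚ_[p]] V)) i with hM
  -- coordinates of jmap
  have hrepr : ∀ (x : B ⊗[ℚ_[p]] V) (i : ι),
      fK.repr (jmap p B V x) i = algebraMap B K (f.repr x i) := by
    intro x
    induction x with
    | zero => simp
    | tmul b v =>
        intro i
        simp only [jmap_tmul, hf, hfK, Algebra.TensorProduct.basis_repr_tmul,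
          Finsupp.smul_apply, Finsupp.mapRange_apply, smul_eq_mul, map_mul,
          ← IsScalarTower.algebraMap_apply ℚ_[p] B K]
        rfl
    | add x y hx hy => intro i; simp only [map_add, Finsupp.add_apply, hx i, hy i]
  -- K-linear independence
  have hdK : LinearIndependent K (fun j => jmap p B V ((d j : B ⊗[ℚ_[p]] V))) :=
    indep_K p G B V hext hreg₁ d hd
  have hcard : Fintype.card ι = Module.finrank K (K ⊗[ℚ_[p]] V) := by
    rw [Module.finrank_eq_card_basis fK]
  let dK : Module.Basis ι K (K ⊗[ℚ_[p]] V) :=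
    basisOfLinearIndependentOfCardEqFinrank hdK hcard
  have hdKcoe : ⇑dK = fun j => jmap p B V ((d j : B ⊗[ℚ_[p]] V)) :=
    coe_basisOfLinearIndependentOfCardEqFinrank hdK hcard
  haveI := fK.invertibleToMatrix dK
  have hMK : fK.toMatrix ⇑dK = M.map (algebraMap B K) := by
    ext i j
    rw [Module.Basis.toMatrix_apply, hdKcoe]
    exact hrepr _ i
  have hunitK : IsUnit ((M.map (algebraMap B K)).det) := by
    rw [← hMK]
    exact (Matrix.isUnit_iff_isUnit_det _).1 (isUnit_of_invertible _)
  have hdet0 : M.det ≠ 0 := by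
    intro h0
    rw [show M.map (algebraMap B K) = (algebraMap B K).mapMatrix M from rfl,
      ← RingHom.map_det, h0, map_zero] at hunitK
    exact not_isUnit_zero hunitK
  -- the representation matrices
  set ρ : G → Matrix ι ι ℚ_[p] :=
    fun g => LinearMap.toMatrix e e (DistribSMul.toLinearMap ℚ_[p] V g) with hρ
  have hgv : ∀ (g : G) (i : ι), g • e i = ∑ k, ρ g k i • e k := by
    intro g i
    have h1 := e.sum_repr (g • e i)
    have h2 : ∀ k, ρ g k i = e.repr (g • e i) k := by
      intro k
      rw [hρ]
      simp only [LinearMap.toMatrix_apply, DistribSMul.toLinearMap_apply]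
    rw [← h1]
    exact (Finset.sum_congr rfl fun k _ => by rw [h2 k]).symm
  have hd_repr : ∀ j, (d j : B ⊗[ℚ_[p]] V) = ∑ i, M i j • f i :=
    fun j => (f.sum_repr _).symm
  -- invariance in coordinates
  have hcoeff : ∀ (g : G) (k j : ι),
      M k j = ∑ i, algebraMap ℚ_[p] B (ρ g k i) * (g • M i j) := by
    intro g k j
    have key : (d j : B ⊗[ℚ_[p]] V)
        = ∑ k', (∑ i, algebraMap ℚ_[p] B (ρ g k' i) * (g • M i j)) • f k' := by
      conv_lhs => rw [← (show diagAct p G B V g ((d j : B ⊗[ℚ_[p]] V)) = (d j : B ⊗[ℚ_[p]] V)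
        from (d j).2 g), hd_repr j]
      rw [map_sum]
      have h1 : ∀ i, diagAct p G B V g (M i j • f i)
          = ∑ k', (algebraMap ℚ_[p] B (ρ g k' i) * (g • M i j)) • f k' := by
        intro i
        rw [show f i = (1 : B) ⊗ₜ[ℚ_[p]] e i from Algebra.TensorProduct.basis_apply e i,
          TensorProduct.smul_tmul', smul_eq_mul, mul_one]
        show (g • M i j) ⊗ₜ[ℚ_[p]] (g • e i) = _
        rw [hgv g i, TensorProduct.tmul_sum]
        refine Finset.sum_congr rfl fun k' _ => ?_
        rw [TensorProduct.tmul_smul, TensorProduct.smul_tmul',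
          show (ρ g k' i • (g • M i j)) = algebraMap ℚ_[p] B (ρ g k' i) * (g • M i j) from
            Algebra.smul_def _ _, ← Algebra.TensorProduct.basis_repr_symm_apply']
      rw [Finset.sum_congr rfl fun i _ => h1 i, Finset.sum_comm]
      exact Finset.sum_congr rfl fun k' _ => (Finset.sum_smul).symm
    have h2 := congrArg (fun z => (f.repr z) k) key
    beta_reduce at h2
    rw [show (f.repr ((d j : B ⊗[ℚ_[p]] V))) k = M k j from rfl] at h2
    rw [h2]
    have h3 := f.repr_sum_self
      (fun k' => ∑ i, algebraMap ℚ_[p] B (ρ g k' i) * (g • M i j))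
    exact congrFun h3 k ▸ rfl
  -- determinant relation
  have hdetrel : ∀ g : G, M.det = algebraMap ℚ_[p] B ((ρ g).det) * (g • M.det) := by
    intro g
    have hMeq : M = ((algebraMap ℚ_[p] B).mapMatrix (ρ g)) * (M.map fun x => g • x) := by
      ext k j
      rw [Matrix.mul_apply]
      exact hcoeff g k j
    conv_lhs => rw [hMeq]
    rw [Matrix.det_mul]
    congr 1
    · exact (RingHom.map_det _ _).symm
    · exact ((MulSemiringAction.toRingHom G B g).map_det M).symm
  have hρmul : ∀ g : G, ρ g * ρ g⁻¹ = 1 := by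
    intro g
    have hcomp : (DistribSMul.toLinearMap ℚ_[p] V g).comp
        (DistribSMul.toLinearMap ℚ_[p] V g⁻¹) = LinearMap.id := by
      ext v
      simp [smul_inv_smul]
    rw [hρ]
    simp only
    rw [← LinearMap.toMatrix_comp e e e, hcomp, LinearMap.toMatrix_id]
  have hdetρ : ∀ g : G, (ρ g).det * (ρ g⁻¹).det = 1 := fun g => by
    rw [← Matrix.det_mul, hρmul, Matrix.det_one]
  have hsc : ∀ g : G, ∃ c : ℚ_[p], g • M.det = c • M.det := by
    intro g
    refine ⟨(ρ g⁻¹).det, ?_⟩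
    have hthis : algebraMap ℚ_[p] B ((ρ g⁻¹).det) * M.det
        = algebraMap ℚ_[p] B ((ρ g⁻¹).det * (ρ g).det) * (g • M.det) := by
      conv_lhs => rw [hdetrel g]
      rw [map_mul]
      ring
    rw [mul_comm ((ρ g⁻¹).det) ((ρ g).det), hdetρ g, map_one, one_mul] at hthis
    rw [Algebra.smul_def, ← hthis]
  have hunit : IsUnit M.det := hreg₂ _ hdet0 hsc
  obtain ⟨u, hu⟩ := (Matrix.isUnit_iff_isUnit_det M).2 hunit
  set N : Matrix ι ι B := ↑u⁻¹ with hN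
  have hMN : M * N = 1 := by rw [hN, ← hu, Units.mul_inv]
  have hf_in : ∀ k, f k = ∑ j, N j k • ((d j : B ⊗[ℚ_[p]] V)) := by
    intro k
    have h5 : ∀ j, N j k • ((d j : B ⊗[ℚ_[p]] V)) = ∑ i, (M i j * N j k) • f i := by
      intro j
      rw [hd_repr j, Finset.smul_sum]
      exact Finset.sum_congr rfl fun i _ => by rw [smul_smul, mul_comm]
    rw [Finset.sum_congr rfl fun j _ => h5 j, Finset.sum_comm]
    have h6 : ∀ i, (∑ j, (M i j * N j k) • f i) = ((M * N) i k) • f i := by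
      intro i
      rw [Matrix.mul_apply, ← Finset.sum_smul]
    rw [Finset.sum_congr rfl fun i _ => h6 i, hMN]
    simp [Matrix.one_apply]
  refine ⟨fun j => ∑ k, f.repr y k * N j k, ?_⟩
  calc ∑ j, (∑ k, f.repr y k * N j k) • ((d j : B ⊗[ℚ_[p]] V))
      = ∑ j, ∑ k, (f.repr y k * N j k) • ((d j : B ⊗[ℚ_[p]] V)) :=
        Finset.sum_congr rfl fun j _ => Finset.sum_smul
    _ = ∑ k, f.repr y k • (∑ j, N j k • ((d j : B ⊗[ℚ_[p]] V))) := by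
        rw [Finset.sum_comm]
        refine Finset.sum_congr rfl fun k _ => ?_
        rw [Finset.smul_sum]
        exact Finset.sum_congr rfl fun j _ => (mul_smul _ _ _)
    _ = ∑ k, f.repr y k • f k := by
        exact Finset.sum_congr rfl fun k _ => by rw [← hf_in k]
    _ = y := f.sum_repr y


end KAct
lemma isFieldE
    (hext : ∀ (g : G) (b : B),
      g • algebraMap B (FractionRing B) b = algebraMap B (FractionRing B) (g • b))
    (hreg₁ : ∀ x : FractionRing B, (∀ g : G, g • x = x) →
      x ∈ (algebraMap B (FractionRing B)).range) :
    IsField (invariantSubring G B) := by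
  set K := FractionRing B
  constructor
  · exact ⟨0, 1, by
      intro h
      exact zero_ne_one (congrArg (Subtype.val) h)⟩
  · exact mul_comm
  · intro a ha
    have hinj : Function.Injective (algebraMap B K) := IsFractionRing.injective B K
    have ha0 : (a : B) ≠ 0 := fun h => ha (Subtype.ext h)
    have hKa : algebraMap B K (a : B) ≠ 0 := fun h => ha0 (hinj (by simpa using h))
    -- the inverse in K is G-invariant
    have hinv : ∀ g : G, g • (algebraMap B K (a : B))⁻¹ = (algebraMap B K (a : B))⁻¹ := by
      intro g
      have : g • (algebraMap B K (a : B))⁻¹ = (g • algebraMap B K (a : B))⁻¹ := by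
        have := map_inv₀ (MulSemiringAction.toRingHom G K g).toMonoidWithZeroHom
          (algebraMap B K (a : B))
        exact this
      rw [this, hext, a.2 g]
    obtain ⟨b, hb⟩ := hreg₁ _ hinv
    have hbE : ∀ g : G, g • b = b := by
      intro g
      apply hinj
      rw [← hext, hb, hinv g]
    refine ⟨⟨b, hbE⟩, ?_⟩
    apply Subtype.ext
    apply hinj
    show algebraMap B K ((a : B) * b) = algebraMap B K 1
    rw [map_mul, map_one, hb, mul_inv_cancel₀ hKa]


end Aux

lemma exists_basis_family {R M : Type*} [CommRing R] [AddCommGroup M] [Module R M]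
    (h : IsField R) {n : ℕ} (hn : 0 < n) (hdim : Module.finrank R M = n) :
    ∃ v : Fin n → M, LinearIndependent R v ∧
      ∀ x : M, ∃ c : Fin n → R, ∑ i, c i • v i = x := by
  letI := h.toField
  haveI : FiniteDimensional R M :=
    FiniteDimensional.of_finrank_pos (by rw [hdim]; exact hn)
  let bas : Module.Basis (Fin n) R M := Module.finBasisOfFinrankEq R M hdim
  refine ⟨⇑bas, bas.linearIndependent, fun x => ⟨fun i => bas.repr x i, bas.sum_repr x⟩⟩

/-- If `B` is `G`-regular, `V` is a finite-dimensional `p`-adic representation of `G`, and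
`dim_E D_B(V) = dim_{ℚ_p} V`, then the natural map `D_B(V) ⊗[E] B → V ⊗[ℚ_p] B`,
`d ⊗ b ↦ b • d`, is bijective; i.e. `V` is `B`-admissible. -/
theorem comparisonMap_bijective_of_finrank_eq
    (p : ℕ) [Fact p.Prime]
    (G : Type*) [Group G]
    (B : Type*) [CommRing B] [IsDomain B] [Algebra ℚ_[p] B]
    [MulSemiringAction G B] [SMulCommClass G ℚ_[p] B]
    [MulSemiringAction G (FractionRing B)]
    (hext : ∀ (g : G) (b : B),
      g • algebraMap B (FractionRing B) b = algebraMap B (FractionRing B) (g • b))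
    (hreg₁ : ∀ x : FractionRing B, (∀ g : G, g • x = x) →
      x ∈ (algebraMap B (FractionRing B)).range)
    (hreg₂ : ∀ b : B, b ≠ 0 →
      (∀ g : G, ∃ c : ℚ_[p], g • b = c • b) → IsUnit b)
    (V : Type*) [AddCommGroup V] [Module ℚ_[p] V] [FiniteDimensional ℚ_[p] V]
    [DistribMulAction G V] [SMulCommClass G ℚ_[p] V]
    (hdim : Module.finrank (invariantSubring G B) (invariantsD p G B V) =
      Module.finrank ℚ_[p] V) :
    Function.Bijective (comparisonMap p G B V) := by
  classical
  haveI : SMulCommClass G ℚ_[p] (FractionRing B) := smulCommClassK p G B hext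
  by_cases hn : Module.finrank ℚ_[p] V = 0
  · -- trivial case
    haveI : Subsingleton V := Module.finrank_zero_iff.1 hn
    have hBV : ∀ x : B ⊗[ℚ_[p]] V, x = 0 := by
      intro x
      induction x with
      | zero => rfl
      | tmul b v => rw [Subsingleton.elim v 0, TensorProduct.tmul_zero]
      | add x y hx hy => rw [hx, hy, add_zero]
    have hD : ∀ dd : invariantsD p G B V, dd = 0 := fun dd => Subtype.ext (hBV dd)
    have hDB : ∀ z : (invariantsD p G B V) ⊗[invariantSubring G B] B, z = 0 := by
      intro z
      induction z with
      | zero => rfl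
      | tmul dd b => rw [hD dd, TensorProduct.zero_tmul]
      | add x y hx hy => rw [hx, hy, add_zero]
    constructor
    · intro a b _; rw [hDB a, hDB b]
    · intro y; exact ⟨0, by rw [map_zero, hBV y]⟩
  · have hpos : 0 < Module.finrank ℚ_[p] V := Nat.pos_of_ne_zero hn
    obtain ⟨d, hd, hspan⟩ := exists_basis_family (M := invariantsD p G B V) (isFieldE G B hext hreg₁) hpos (by exact hdim)
    haveI : Nonempty (Fin (Module.finrank ℚ_[p] V)) := ⟨⟨0, hpos⟩⟩
    have hindB : ∀ (b : Fin (Module.finrank ℚ_[p] V) → B),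
        (∑ i, b i • ((d i : B ⊗[ℚ_[p]] V))) = 0 → ∀ i, b i = 0 := by
      intro b hb i
      have hK := indep_K p G B V hext hreg₁ d hd
      have hzero : ∑ i, (algebraMap B (FractionRing B) (b i)) •
          jmap p B V ((d i : B ⊗[ℚ_[p]] V)) = 0 := by
        have hj := congrArg (jmap p B V) hb
        rw [map_sum, map_zero] at hj
        rw [← hj]
        exact Finset.sum_congr rfl fun i _ => (jmap_smul p B V _ _).symm
      have h := linearIndependent_iff'.1 hK Finset.univ
        (fun i => algebraMap B (FractionRing B) (b i)) hzero i (Finset.mem_univ i)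
      have h' : algebraMap B (FractionRing B) (b i) = 0 := h
      exact IsFractionRing.injective B (FractionRing B) (by rw [h', map_zero])
    have hform : ∀ x : (invariantsD p G B V) ⊗[invariantSubring G B] B,
        ∃ b : Fin (Module.finrank ℚ_[p] V) → B, x = ∑ i, d i ⊗ₜ b i := by
      intro x
      induction x with
      | zero =>
          refine ⟨0, ?_⟩
          simp only [Pi.zero_apply, TensorProduct.tmul_zero, Finset.sum_const_zero]
      | tmul dd b =>
          obtain ⟨c, hc⟩ := hspan dd
          refine ⟨fun i => (c i : B) * b, ?_⟩
          conv_lhs => rw [← hc]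
          rw [TensorProduct.sum_tmul]
          refine Finset.sum_congr rfl fun i _ => ?_
          rw [TensorProduct.smul_tmul]
          rfl
      | add x y hx hy =>
          obtain ⟨b1, h1⟩ := hx
          obtain ⟨b2, h2⟩ := hy
          refine ⟨b1 + b2, ?_⟩
          rw [h1, h2, ← Finset.sum_add_distrib]
          exact Finset.sum_congr rfl fun i _ => (TensorProduct.tmul_add _ _ _).symm
    have hmap : ∀ (b : Fin (Module.finrank ℚ_[p] V) → B),
        comparisonMap p G B V (∑ i, d i ⊗ₜ b i) = ∑ i, b i • ((d i : B ⊗[ℚ_[p]] V)) := by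
      intro b
      rw [map_sum]
      rfl
    constructor
    · have hker : ∀ x, comparisonMap p G B V x = 0 → x = 0 := by
        intro x hx
        obtain ⟨b, rfl⟩ := hform x
        rw [hmap] at hx
        have hb := hindB b hx
        have hterm : ∀ i ∈ Finset.univ, d i ⊗ₜ[invariantSubring G B] b i = 0 := by
          intro i _
          rw [hb i, TensorProduct.tmul_zero]
        rw [Finset.sum_congr rfl hterm, Finset.sum_const_zero]
      intro a b hab
      obtain ⟨b1, rfl⟩ := hform a
      obtain ⟨b2, rfl⟩ := hform b
      rw [hmap, hmap] at hab
      have hb := hindB (fun i => b1 i - b2 i)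
        (by
          rw [show (0 : B ⊗[ℚ_[p]] V) = _ - _ from (sub_eq_zero.2 hab).symm,
            ← Finset.sum_sub_distrib]
          exact Finset.sum_congr rfl fun i _ => by
            rw [eq_sub_iff_add_eq, ← add_smul, sub_add_cancel])
      exact Finset.sum_congr rfl fun i _ => by rw [sub_eq_zero.1 (hb i)]
    · intro y
      obtain ⟨b, hb⟩ := span_exists p G B V hext hreg₁ hreg₂
        (by rw [Fintype.card_fin]) d hd y
      exact ⟨∑ i, d i ⊗ₜ b i, by rw [hmap, hb]⟩
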